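/- For any diassociative algebra D and any relative averaging algebra (A, M, P), there is a natural bijection Hom_Diass(D, M_P) ≅ Hom_rAvg(D → D_Ass, M → A): every diassociative morphism ψ : D → M_P extends uniquely to a relative averaging algebra morphism (φ^ψ, ψ) where φ^ψ([a]) = P(ψ(a)). (In particular, the functor D ↦ (D → D_Ass) is left adjoint to (M → A) ↦ M_P.) -/
import Mathlib


/-- An `A`-bimodule structure on `M` over an associative algebra `A`:
left and right actions that are biadditive and associative/compatible. -/
structure ABimodule (A : Type*) (M : Type*) [Ring A] [AddCommGroup M] where
  lsmul : A → M → M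
  rsmul : M → A → M
  lsmul_add : ∀ a u v, lsmul a (u + v) = lsmul a u + lsmul a v
  add_lsmul : ∀ a b u, lsmul (a + b) u = lsmul a u + lsmul b u
  rsmul_add : ∀ u v a, rsmul (u + v) a = rsmul u a + rsmul v a
  add_rsmul : ∀ u a b, rsmul u (a + b) = rsmul u a + rsmul u b
  mul_lsmul : ∀ a b u, lsmul (a * b) u = lsmul a (lsmul b u)
  rsmul_mul : ∀ u a b, rsmul u (a * b) = rsmul (rsmul u a) b
  lsmul_rsmul : ∀ a u b, rsmul (lsmul a u) b = lsmul a (rsmul u b)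

/-- `P : M → A` is a relative averaging operator:
`P(u)·P(v) = P(P(u)·v) = P(u·P(v))`. -/
def IsRelAvgOp {A M : Type*} [Ring A] [AddCommGroup M]
    (ρ : ABimodule A M) (P : M → A) : Prop :=
  ∀ u v : M, P u * P v = P (ρ.lsmul (P u) v) ∧ P u * P v = P (ρ.rsmul u (P v))

/-- The five diassociative algebra identities for a pair of binary operations. -/
def IsDiassoc {D : Type*} (dl dr : D → D → D) : Prop :=
  ∀ x y z : D,
    dl (dl x y) z = dl x (dl y z) ∧
    dl x (dl y z) = dl x (dr y z) ∧
    dl (dr x y) z = dr x (dl y z) ∧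
    dr (dl x y) z = dr (dr x y) z ∧
    dr (dr x y) z = dr x (dr y z)

/-- The ideal of a diassociative algebra generated by the elements `a ⊣ b − a ⊢ b`. -/
def diassIdeal {D : Type*} [AddCommGroup D] (dl dr : D → D → D) : AddSubgroup D :=
  sInf {S : AddSubgroup D |
    (∀ a b : D, dl a b - dr a b ∈ S) ∧
    ∀ x ∈ S, ∀ d : D, dl x d ∈ S ∧ dl d x ∈ S ∧ dr x d ∈ S ∧ dr d x ∈ S}

/-- Adjunction: for a diassociative algebra `D` (with its quotient
`D_Ass = B`, quotient map `q`, and the induced `B`-bimodule structure on `D`) and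
any relative averaging algebra `(A, M, P)`, every diassociative algebra morphism
`ψ : D → M_P` extends uniquely to a morphism `(φ, ψ)` of relative averaging
algebras from `(B, D, q)` to `(A, M, P)`, with `φ([a]) = P(ψ a)`.  This gives the
bijection `Hom_Diass(D, M_P) ≅ Hom_rAvg(D → D_Ass, M → A)`, i.e. the functor
`D ↦ (D → D_Ass)` is left adjoint to `(M → A) ↦ M_P`. -/
theorem diass_quotient_adjunction
    (D : Type*) [AddCommGroup D] (dl dr : D → D → D)
    (hdl₁ : ∀ a b c : D, dl (a + b) c = dl a c + dl b c)
    (hdl₂ : ∀ a b c : D, dl a (b + c) = dl a b + dl a c)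
    (hdr₁ : ∀ a b c : D, dr (a + b) c = dr a c + dr b c)
    (hdr₂ : ∀ a b c : D, dr a (b + c) = dr a b + dr a c)
    (hD : IsDiassoc dl dr)
    -- the quotient associative algebra `B = D_Ass` with quotient map `q`
    (B : Type*) [NonUnitalRing B] (q : D → B)
    (hq_surj : Function.Surjective q)
    (hq_add : ∀ a b, q (a + b) = q a + q b)
    (hq_mul₁ : ∀ a b, q a * q b = q (dl a b))
    (hq_mul₂ : ∀ a b, q a * q b = q (dr a b))
    (hker : ∀ x, q x = 0 ↔ x ∈ diassIdeal dl dr)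
    -- the `B`-bimodule structure on `D`: `[a]·b = a ⊢ b`, `b·[a] = b ⊣ a`
    (lB : B → D → D) (rB : D → B → D)
    (hlB : ∀ a b, lB (q a) b = dr a b)
    (hrB : ∀ b a, rB b (q a) = dl b a)
    -- a relative averaging algebra `(A, M, P)`
    (A M : Type*) [Ring A] [AddCommGroup M] (ρ : ABimodule A M)
    (P : M → A) (hP : IsRelAvgOp ρ P)
    (hP_add : ∀ u v, P (u + v) = P u + P v)
    -- a diassociative algebra morphism `ψ : D → M_P`
    (ψ : D → M)
    (hψ_add : ∀ a b, ψ (a + b) = ψ a + ψ b)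
    (hψ₁ : ∀ a b, ψ (dl a b) = ρ.rsmul (ψ a) (P (ψ b)))
    (hψ₂ : ∀ a b, ψ (dr a b) = ρ.lsmul (P (ψ a)) (ψ b)) :
    ∃! φ : B → A,
      (∀ b b', φ (b + b') = φ b + φ b') ∧
      (∀ b b', φ (b * b') = φ b * φ b') ∧
      (∀ (b : B) (x : D), ψ (lB b x) = ρ.lsmul (φ b) (ψ x)) ∧
      (∀ (x : D) (b : B), ψ (rB x b) = ρ.rsmul (ψ x) (φ b)) ∧
      (∀ x : D, φ (q x) = P (ψ x)) := by
  classical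
  -- basic additivity facts
  have hψ0 : ψ 0 = 0 := by
    have h := hψ_add 0 0
    rw [add_zero] at h
    exact (add_eq_left.mp h.symm)
  have hψsub : ∀ x y, ψ (x - y) = ψ x - ψ y := by
    intro x y
    have h := hψ_add (x - y) y
    rw [sub_add_cancel] at h
    rw [eq_sub_iff_add_eq, ← h]
  have hPsub : ∀ u v, P (u - v) = P u - P v := by
    intro u v
    have h := hP_add (u - v) v
    rw [sub_add_cancel] at h
    rw [eq_sub_iff_add_eq, ← h]
  have hqsub : ∀ x y, q (x - y) = q x - q y := by
    intro x y
    have h := hq_add (x - y) y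
    rw [sub_add_cancel] at h
    rw [eq_sub_iff_add_eq, ← h]
  -- the subgroup on which P ∘ ψ vanishes
  set S : AddSubgroup D :=
    { carrier := {x | P (ψ x) = 0}
      add_mem' := by
        intro a b ha hb
        simp only [Set.mem_setOf_eq] at *
        rw [hψ_add, hP_add, ha, hb, add_zero]
      zero_mem' := by
        simp only [Set.mem_setOf_eq, hψ0]
        have h := hP_add 0 0
        rw [add_zero] at h
        exact (add_eq_left.mp h.symm)
      neg_mem' := by
        intro a ha
        simp only [Set.mem_setOf_eq] at *
        have : P (ψ (0 - a)) = P (ψ 0) - P (ψ a) := by rw [hψsub, hPsub]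
        rw [zero_sub] at this
        rw [this, ha, hψ0, sub_zero]
        have h := hP_add 0 0
        rw [add_zero] at h
        exact (add_eq_left.mp h.symm) } with hSdef
  have hSmem : ∀ x ∈ diassIdeal dl dr, P (ψ x) = 0 := by
    intro x hx
    have hle : diassIdeal dl dr ≤ S := by
      apply sInf_le
      constructor
      · intro a b
        show P (ψ (dl a b - dr a b)) = 0
        rw [hψsub, hPsub, hψ₁, hψ₂, ← (hP (ψ a) (ψ b)).2, ← (hP (ψ a) (ψ b)).1,
          sub_self]
      · intro y hy d
        have hy' : P (ψ y) = 0 := hy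
        refine ⟨?_, ?_, ?_, ?_⟩
        · show P (ψ (dl y d)) = 0
          rw [hψ₁, ← (hP (ψ y) (ψ d)).2, hy', zero_mul]
        · show P (ψ (dl d y)) = 0
          rw [hψ₁, ← (hP (ψ d) (ψ y)).2, hy', mul_zero]
        · show P (ψ (dr y d)) = 0
          rw [hψ₂, ← (hP (ψ y) (ψ d)).1, hy', zero_mul]
        · show P (ψ (dr d y)) = 0
          rw [hψ₂, ← (hP (ψ d) (ψ y)).1, hy', mul_zero]
    exact hle hx
  -- well-definedness
  have key : ∀ x y : D, q x = q y → P (ψ x) = P (ψ y) := by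
    intro x y hxy
    have h0 : q (x - y) = 0 := by rw [hqsub, hxy, sub_self]
    have := hSmem (x - y) ((hker _).mp h0)
    rw [hψsub, hPsub] at this
    exact sub_eq_zero.mp this
  -- define φ
  refine ⟨fun b => P (ψ (hq_surj b).choose), ?_, ?_⟩
  · have hφq : ∀ x : D, P (ψ (hq_surj (q x)).choose) = P (ψ x) := fun x =>
      key _ _ ((hq_surj (q x)).choose_spec)
    refine ⟨?_, ?_, ?_, ?_, hφq⟩
    · intro b b'
      obtain ⟨a, rfl⟩ := hq_surj b
      obtain ⟨a', rfl⟩ := hq_surj b'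
      beta_reduce
      rw [← hq_add, hφq, hφq, hφq, hψ_add, hP_add]
    · intro b b'
      obtain ⟨a, rfl⟩ := hq_surj b
      obtain ⟨a', rfl⟩ := hq_surj b'
      beta_reduce
      rw [hq_mul₁, hφq, hφq, hφq, hψ₁, ← (hP (ψ a) (ψ a')).2]
    · intro b x
      obtain ⟨a, rfl⟩ := hq_surj b
      beta_reduce
      rw [hlB, hψ₂, hφq]
    · intro x b
      obtain ⟨a, rfl⟩ := hq_surj b
      beta_reduce
      rw [hrB, hψ₁, hφq]
  · intro φ' hφ'
    funext b
    obtain ⟨a, rfl⟩ := hq_surj b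
    rw [hφ'.2.2.2.2 a]
    exact (key _ _ ((hq_surj (q a)).choose_spec)).symm
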